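/- Let u, w ∈ E be unit vectors and let S be a self-adjoint continuous linear operator on E with ⟨u, S u⟩ = 0. Then |⟨w, S w⟩| ≤ 2·‖S‖·√(1 − |⟨u, w⟩|²), where ‖S‖ is the operator norm. Equivalently, ⟨w, S w⟩²/(4‖S‖²) + |⟨u, w⟩|² ≤ 1. -/

import Mathlib

/-- The Krylov-complexity bound (Appendix F): for a self-adjoint operator `S` with vanishing
expectation in the unit vector `u`, the expectation in any unit vector `w` satisfies
`|⟨w, S w⟩| ≤ 2‖S‖√(1 − |⟨u, w⟩|²)`; equivalently
`⟨w, S w⟩²/(4‖S‖²) + |⟨u, w⟩|² ≤ 1`. -/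
theorem krylov_complexity_bound
    {E : Type*} [NormedAddCommGroup E] [InnerProductSpace ℂ E] [FiniteDimensional ℂ E]
    (u w : E) (hu : ‖u‖ = 1) (hw : ‖w‖ = 1)
    (S : E →L[ℂ] E) (hS : IsSelfAdjoint S) (hSu : (inner ℂ u (S u) : ℂ) = 0) :
    ‖(inner ℂ w (S w) : ℂ)‖ ≤ 2 * ‖S‖ * Real.sqrt (1 - ‖(inner ℂ u w : ℂ)‖ ^ 2) ∧
    ((inner ℂ w (S w) : ℂ).re) ^ 2 / (4 * ‖S‖ ^ 2) + ‖(inner ℂ u w : ℂ)‖ ^ 2 ≤ 1 := by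
  have hsym := hS.isSymmetric
  set α : ℂ := inner ℂ u w with hα
  set v : E := w - α • u with hv
  have ha1 : ‖α‖ ≤ 1 := by
    calc ‖α‖ ≤ ‖u‖ * ‖w‖ := norm_inner_le_norm u w
    _ = 1 := by rw [hu, hw]; ring
  -- ‖v‖ ^ 2 = 1 - ‖α‖ ^ 2
  have hwα : (inner ℂ w (α • u) : ℂ) = (‖α‖ : ℂ) ^ 2 := by
    rw [inner_smul_right]
    have : (inner ℂ w u : ℂ) = starRingEnd ℂ α := by rw [hα, ← inner_conj_symm]
    rw [this, Complex.mul_conj']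
  have hv2 : ‖v‖ ^ 2 = 1 - ‖α‖ ^ 2 := by
    have := norm_sub_sq (𝕜 := ℂ) w (α • u)
    rw [hwα] at this
    simp only [← hv] at this
    rw [this, hw, norm_smul, hu]
    simp [← Complex.ofReal_pow]
    ring
  have hsq : Real.sqrt (1 - ‖α‖ ^ 2) = ‖v‖ := by
    rw [← hv2]; exact Real.sqrt_sq (norm_nonneg v)
  have hvle : ‖v‖ ≤ 1 := by
    nlinarith [norm_nonneg v, norm_nonneg α]
  -- key identity
  have huSw : (inner ℂ u (S w) : ℂ) = inner ℂ u (S v) := by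
    have : w = α • u + v := by rw [hv]; abel
    rw [this, map_add, map_smul, inner_add_right, inner_smul_right, hSu]
    simp
  have key : (inner ℂ w (S w) : ℂ) = inner ℂ w (S v) + α * starRingEnd ℂ (inner ℂ u (S v)) := by
    have hw' : w = α • u + v := by rw [hv]; abel
    have h1 : (inner ℂ w (S u) : ℂ) = starRingEnd ℂ (inner ℂ u (S v)) := by
      rw [← huSw, inner_conj_symm]
      exact (hsym w u).symm
    calc (inner ℂ w (S w) : ℂ) = inner ℂ w (S (α • u + v)) := by rw [← hw']
    _ = α * inner ℂ w (S u) + inner ℂ w (S v) := by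
        rw [map_add, map_smul, inner_add_right, inner_smul_right]
    _ = inner ℂ w (S v) + α * starRingEnd ℂ (inner ℂ u (S v)) := by rw [h1]; ring
  -- norm bound
  have hb1 : ‖(inner ℂ w (S v) : ℂ)‖ ≤ ‖S‖ * ‖v‖ := by
    calc ‖(inner ℂ w (S v) : ℂ)‖ ≤ ‖w‖ * ‖S v‖ := norm_inner_le_norm w (S v)
    _ = ‖S v‖ := by rw [hw, one_mul]
    _ ≤ ‖S‖ * ‖v‖ := S.le_opNorm v
  have hb2 : ‖(inner ℂ u (S v) : ℂ)‖ ≤ ‖S‖ * ‖v‖ := by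
    calc ‖(inner ℂ u (S v) : ℂ)‖ ≤ ‖u‖ * ‖S v‖ := norm_inner_le_norm u (S v)
    _ = ‖S v‖ := by rw [hu, one_mul]
    _ ≤ ‖S‖ * ‖v‖ := S.le_opNorm v
  have main : ‖(inner ℂ w (S w) : ℂ)‖ ≤ 2 * ‖S‖ * ‖v‖ := by
    rw [key]
    calc ‖(inner ℂ w (S v) : ℂ) + α * starRingEnd ℂ (inner ℂ u (S v))‖
        ≤ ‖(inner ℂ w (S v) : ℂ)‖ + ‖α * starRingEnd ℂ (inner ℂ u (S v))‖ := norm_add_le _ _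
    _ = ‖(inner ℂ w (S v) : ℂ)‖ + ‖α‖ * ‖(inner ℂ u (S v) : ℂ)‖ := by
        rw [norm_mul, RCLike.norm_conj]
    _ ≤ ‖S‖ * ‖v‖ + 1 * (‖S‖ * ‖v‖) := by
        refine add_le_add hb1 ?_
        exact mul_le_mul ha1 hb2 (norm_nonneg _) zero_le_one
    _ = 2 * ‖S‖ * ‖v‖ := by ring
  have main' : ‖(inner ℂ w (S w) : ℂ)‖ ≤ 2 * ‖S‖ * Real.sqrt (1 - ‖α‖ ^ 2) := by
    rw [hsq]; exact main
  refine ⟨main', ?_⟩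
  have hre : |((inner ℂ w (S w) : ℂ)).re| ≤ ‖(inner ℂ w (S w) : ℂ)‖ := Complex.abs_re_le_norm _
  by_cases hS0 : ‖S‖ = 0
  · have hSz : S = 0 := (ContinuousLinearMap.opNorm_zero_iff S).mp hS0
    have hz : (inner ℂ w (S w) : ℂ) = 0 := by rw [hSz]; simp
    rw [hz, hS0]
    have : ‖α‖ ^ 2 ≤ 1 := by nlinarith [norm_nonneg α]
    simp only [Complex.zero_re]
    rw [show (0:ℝ) ^ 2 / (4 * (0:ℝ) ^ 2) = 0 by norm_num, zero_add]
    exact this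
  · have hSpos : 0 < ‖S‖ := lt_of_le_of_ne (norm_nonneg S) (Ne.symm hS0)
    have h1 : ((inner ℂ w (S w) : ℂ)).re ^ 2 ≤ (2 * ‖S‖ * ‖v‖) ^ 2 := by
      have h2 : |((inner ℂ w (S w) : ℂ)).re| ≤ 2 * ‖S‖ * ‖v‖ := le_trans hre main
      nlinarith [abs_nonneg ((inner ℂ w (S w) : ℂ)).re, sq_abs ((inner ℂ w (S w) : ℂ)).re]
    have h3 : (2 * ‖S‖ * ‖v‖) ^ 2 = 4 * ‖S‖ ^ 2 * (1 - ‖α‖ ^ 2) := by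
      rw [mul_pow, mul_pow, hv2]; ring
    rw [div_add' _ _ _ (by positivity), div_le_one (by positivity)]
    nlinarith [h1, h3]
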